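/- Let n ≥ 1, let c : (Fin n →₀ ℕ) → ℂ be a coefficient function that is not identically zero, and let R > 0 be such that for every z in the polydisc {z ∈ ℂⁿ : |z_k| < R for all k} the family J ↦ c_J·∏_k z_k^{J_k} is summable; define f(z) = Σ_J c_J·∏_k z_k^{J_k} on this polydisc. Then for every a ∈ ℝⁿ with a_k > 0 for all k: ν(log|f(·)|, a) = min{ Σ_k a_k·J_k : J with c_J ≠ 0 }, where log|f(z)| is interpreted as -∞ at points where f(z) = 0, and the minimum on the right-hand side exists because {J ∈ ℕⁿ : Σ_k a_k·J_k ≤ C} is finite for every C. -/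

import Mathlib

open Filter Topology

/-- The directional weight `φ_a(z) = max_k a_k⁻¹ · log |z_k|`, where indices with
`z_k = 0` contribute `-∞` (i.e. are dropped from the maximum).  For `z ≠ 0` the
supremum below is a (finite) real number, recovered via `EReal.toReal`. -/
noncomputable def phiW {n : ℕ} (a : Fin n → ℝ) (z : Fin n → ℂ) : ℝ :=
  (⨆ k : Fin n, if z k = 0 then (⊥ : EReal)
    else (((a k)⁻¹ * Real.log (‖z k‖) : ℝ) : EReal)).toReal

/-- The directional Lelong number `ν(u,a) = liminf_{z→0, z≠0} u(z)/φ_a(z)` of an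
extended-real-valued function `u` (so that `u = log|f|` may take the value `-∞`
on the zero set of `f`), the lower limit and the quotient taken in the extended
reals along the punctured neighborhood filter of `0`. -/
noncomputable def dirLelongE {n : ℕ} (u : (Fin n → ℂ) → EReal) (a : Fin n → ℝ) : EReal :=
  liminf (fun z => u z / ((phiW a z : ℝ) : EReal)) (𝓝[≠] (0 : Fin n → ℂ))

lemma phiW_spec {n : ℕ} (a : Fin n → ℝ) (z : Fin n → ℂ) (hz : z ≠ 0) :
    (∃ k, z k ≠ 0 ∧ phiW a z = (a k)⁻¹ * Real.log (‖z k‖)) ∧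
    (∀ k, z k ≠ 0 → (a k)⁻¹ * Real.log (‖z k‖) ≤ phiW a z) := by
  obtain ⟨k₀, hk₀⟩ : ∃ k, z k ≠ 0 := by
    by_contra h; push_neg at h; exact hz (funext h)
  set G : Fin n → EReal := fun k => if z k = 0 then (⊥ : EReal)
    else (((a k)⁻¹ * Real.log (‖z k‖) : ℝ) : EReal) with hG
  have hne : Nonempty (Fin n) := ⟨k₀⟩
  obtain ⟨km, hkm⟩ := Finite.exists_max G
  have hsup : (⨆ k, G k) = G km := le_antisymm (iSup_le hkm) (le_iSup G km)
  have hGk₀ : G k₀ = (((a k₀)⁻¹ * Real.log (‖z k₀‖) : ℝ) : EReal) := if_neg hk₀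
  have hzkm : z km ≠ 0 := by
    intro h
    have hb : G km = ⊥ := if_pos h
    have := hkm k₀
    rw [hb, hGk₀, le_bot_iff] at this
    exact EReal.coe_ne_bot _ this
  have hGkm : G km = (((a km)⁻¹ * Real.log (‖z km‖) : ℝ) : EReal) := if_neg hzkm
  have hphi : phiW a z = (a km)⁻¹ * Real.log (‖z km‖) := by
    have : phiW a z = (⨆ k, G k).toReal := rfl
    rw [this, hsup, hGkm, EReal.toReal_coe]
  refine ⟨⟨km, hzkm, hphi⟩, fun k hk => ?_⟩
  have h1 : G k ≤ G km := hkm k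
  simp only [hG] at h1
  rw [if_neg hk, if_neg hzkm] at h1
  rw [hphi]
  exact_mod_cast h1

lemma phiW_tendsto {n : ℕ} (a : Fin n → ℝ) (ha : ∀ k, 0 < a k) :
    Tendsto (fun z => phiW a z) (𝓝[≠] (0 : Fin n → ℂ)) atBot := by
  rw [tendsto_atBot]
  intro b
  set b' : ℝ := min b 0 with hb'
  set A : ℝ := 1 + ∑ k, a k with hA
  have hA1 : (1:ℝ) ≤ A := by
    have : (0:ℝ) ≤ ∑ k, a k := Finset.sum_nonneg fun k _ => (ha k).le
    simp [hA]; linarith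
  have hAk : ∀ k, a k ≤ A := by
    intro k
    have : a k ≤ ∑ j, a j :=
      Finset.single_le_sum (fun j _ => (ha j).le) (Finset.mem_univ k)
    simp [hA]; linarith
  set δ : ℝ := Real.exp (A * b') with hδ
  have hδpos : 0 < δ := Real.exp_pos _
  have h1 : ∀ᶠ z in 𝓝 (0 : Fin n → ℂ), ‖z‖ < δ := by
    have := Metric.ball_mem_nhds (0 : Fin n → ℂ) hδpos
    filter_upwards [this] with z hzb
    simpa [mem_ball_zero_iff] using hzb
  filter_upwards [h1.filter_mono nhdsWithin_le_nhds, eventually_mem_nhdsWithin] with z hz hz0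
  have hz0' : z ≠ 0 := hz0
  obtain ⟨⟨k, hk, hphi⟩, -⟩ := phiW_spec a z hz0'
  have habs : ‖z k‖ < δ := by
    have := norm_le_pi_norm z k
    simpa using lt_of_le_of_lt this hz
  have habs0 : 0 < ‖z k‖ := by
    simpa [norm_pos_iff] using hk
  have hlog : Real.log (‖z k‖) < A * b' := by
    calc Real.log (‖z k‖) < Real.log δ := Real.log_lt_log habs0 habs
    _ = A * b' := Real.log_exp _
  have hb'0 : b' ≤ 0 := min_le_right _ _
  have h2 : A * b' ≤ a k * b' := mul_le_mul_of_nonpos_right (hAk k) hb'0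
  have h3 : Real.log (‖z k‖) ≤ a k * b := by
    have : a k * b' ≤ a k * b := mul_le_mul_of_nonneg_left (min_le_left _ _) (ha k).le
    linarith
  rw [hphi]
  calc (a k)⁻¹ * Real.log (‖z k‖) ≤ (a k)⁻¹ * (a k * b) :=
        mul_le_mul_of_nonneg_left h3 (inv_nonneg.mpr (ha k).le)
  _ = b := inv_mul_cancel_left₀ (ha k).ne' b

lemma finite_low {n : ℕ} (a : Fin n → ℝ) (ha : ∀ k, 0 < a k) (B : ℝ) :
    {J : Fin n →₀ ℕ | (∑ k, a k * (J k : ℝ)) ≤ B}.Finite := by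
  classical
  set Jmax : Fin n →₀ ℕ := Finsupp.equivFunOnFinite.symm (fun k => ⌈B / a k⌉₊) with hJ
  refine (Set.finite_Iic Jmax).subset ?_
  intro J hJ'
  simp only [Set.mem_setOf_eq] at hJ'
  rw [Set.mem_Iic, Finsupp.le_def]
  intro k
  have h1 : a k * (J k : ℝ) ≤ B := by
    have := Finset.single_le_sum (f := fun j => a j * (J j : ℝ))
      (fun j _ => mul_nonneg (ha j).le (Nat.cast_nonneg _)) (Finset.mem_univ k)
    linarith
  have h2 : (J k : ℝ) ≤ B / a k := (le_div_iff₀' (ha k)).mpr h1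
  have h3 : (J k : ℝ) ≤ (⌈B / a k⌉₊ : ℝ) := h2.trans (Nat.le_ceil _)
  have : J k ≤ ⌈B / a k⌉₊ := by exact_mod_cast h3
  have hmk : Jmax k = ⌈B / a k⌉₊ := rfl
  rw [hmk]; exact this

lemma exists_min_index {n : ℕ} (a : Fin n → ℝ) (ha : ∀ k, 0 < a k)
    (c : (Fin n →₀ ℕ) → ℂ) (hc : ∃ J, c J ≠ 0) :
    ∃ J₀ : Fin n →₀ ℕ, c J₀ ≠ 0 ∧
      (∀ J, c J ≠ 0 → (∑ k, a k * (J₀ k : ℝ)) ≤ ∑ k, a k * (J k : ℝ)) ∧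
      sInf {x : ℝ | ∃ J : Fin n →₀ ℕ, c J ≠ 0 ∧ x = ∑ k, a k * (J k : ℝ)}
        = ∑ k, a k * (J₀ k : ℝ) := by
  classical
  obtain ⟨J₁, hJ₁⟩ := hc
  set wa : (Fin n →₀ ℕ) → ℝ := fun J => ∑ k, a k * (J k : ℝ) with hwa
  set B := wa J₁ with hB
  have hfin : {J : Fin n →₀ ℕ | c J ≠ 0 ∧ wa J ≤ B}.Finite :=
    (finite_low a ha B).subset (fun J hJ => hJ.2)
  have hmem : J₁ ∈ hfin.toFinset := by
    simp [Set.Finite.mem_toFinset, hJ₁, hB]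
  obtain ⟨J₀, hJ₀mem, hJ₀min⟩ := hfin.toFinset.exists_min_image wa ⟨J₁, hmem⟩
  rw [Set.Finite.mem_toFinset] at hJ₀mem
  obtain ⟨hJ₀ne, hJ₀le⟩ := hJ₀mem
  have hmin : ∀ J, c J ≠ 0 → wa J₀ ≤ wa J := by
    intro J hJ
    by_cases h : wa J ≤ B
    · exact hJ₀min J (by simp [Set.Finite.mem_toFinset, hJ, h])
    · exact le_trans (hJ₀min J₁ hmem) (le_of_not_ge h)
  refine ⟨J₀, hJ₀ne, hmin, ?_⟩
  apply le_antisymm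
  · exact csInf_le ⟨wa J₀, fun x ⟨J, hJ, hx⟩ => hx ▸ hmin J hJ⟩ ⟨J₀, hJ₀ne, rfl⟩
  · exact le_csInf ⟨B, J₁, hJ₁, rfl⟩ (fun x ⟨J, hJ, hx⟩ => hx ▸ hmin J hJ)

lemma summable_abs_aux {n : ℕ} (c : (Fin n →₀ ℕ) → ℂ) (R : ℝ)
    (hsum : ∀ z : Fin n → ℂ, (∀ k, ‖z k‖ < R) →
      Summable fun J : Fin n →₀ ℕ => c J * ∏ k, z k ^ J k)
    (r : Fin n → ℝ) (h0 : ∀ k, 0 ≤ r k) (hlt : ∀ k, r k < R) :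
    Summable fun J : Fin n →₀ ℕ => ‖c J‖ * ∏ k, (r k) ^ (J k) := by
  have h := hsum (fun k => (r k : ℂ)) (by
    intro k; simpa [Complex.norm_real, abs_of_nonneg (h0 k)] using hlt k)
  have h2 := summable_norm_iff.mpr h
  convert h2 using 2 with J
  rw [norm_mul, norm_prod]
  congr 1
  exact Finset.prod_congr rfl fun k _ => by
    rw [norm_pow, Complex.norm_real, Real.norm_eq_abs, abs_of_nonneg (h0 k)]

/-- t ^ (∑ a_k J_k) = ∏ (t^{a_k})^{J_k} for t > 0 -/
lemma rpow_wa {n : ℕ} (a : Fin n → ℝ) (t : ℝ) (ht : 0 < t) (J : Fin n →₀ ℕ) :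
    t ^ (∑ k, a k * (J k : ℝ)) = ∏ k, (t ^ (a k)) ^ (J k) := by
  rw [Real.rpow_def_of_pos ht, Finset.mul_sum, Real.exp_sum]
  refine Finset.prod_congr rfl fun k _ => ?_
  rw [← Real.rpow_natCast (t ^ a k) (J k), ← Real.rpow_mul ht.le,
    Real.rpow_def_of_pos ht]

lemma upper_est {n : ℕ} (c : (Fin n →₀ ℕ) → ℂ) (R : ℝ) (hR : 0 < R)
    (hsum : ∀ z : Fin n → ℂ, (∀ k, ‖z k‖ < R) →
      Summable fun J : Fin n →₀ ℕ => c J * ∏ k, z k ^ J k)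
    (a : Fin n → ℝ) (ha : ∀ k, 0 < a k)
    (m : ℝ) (J₀ : Fin n →₀ ℕ) (hJ₀ : c J₀ ≠ 0) (hm : m = ∑ k, a k * (J₀ k : ℝ))
    (hmin : ∀ J, c J ≠ 0 → m ≤ ∑ k, a k * (J k : ℝ)) :
    ∃ φ₀ C : ℝ, φ₀ < 0 ∧ 0 < C ∧ ∀ z : Fin n → ℂ, z ≠ 0 → phiW a z ≤ φ₀ →
      ‖∑' J : Fin n →₀ ℕ, c J * ∏ k, z k ^ J k‖
        ≤ C * Real.exp (m * (phiW a z - φ₀)) := by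
  classical
  set L : ℝ := min (Real.log R) 0 - 1 with hL
  have hL0 : L < 0 := by have := min_le_right (Real.log R) 0; rw [hL]; linarith
  have hLR : L < Real.log R := by have := min_le_left (Real.log R) 0; rw [hL]; linarith
  set M : ℝ := 1 + ∑ k, (a k)⁻¹ with hM
  have hM1 : (1:ℝ) ≤ M := by
    have : (0:ℝ) ≤ ∑ k, (a k)⁻¹ :=
      Finset.sum_nonneg fun k _ => (inv_nonneg.mpr (ha k).le)
    simp [hM]; linarith
  have hMk : ∀ k, (a k)⁻¹ ≤ M := by
    intro k
    have := Finset.single_le_sum (f := fun j => (a j)⁻¹)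
      (fun j _ => inv_nonneg.mpr (ha j).le) (Finset.mem_univ k)
    simp [hM]; linarith
  set φ₀ : ℝ := L * M with hφ₀
  have hφ₀neg : φ₀ < 0 := mul_neg_of_neg_of_pos hL0 (by linarith)
  have hkey : ∀ k, a k * φ₀ ≤ L := by
    intro k
    have h1 : (a k)⁻¹ * (a k * φ₀) = φ₀ := inv_mul_cancel_left₀ (ha k).ne' φ₀
    -- a k * φ₀ = a k * L * M ≤ L  ⟺  a k * M ≥ 1
    have h2 : 1 ≤ a k * M := by
      have := hMk k
      calc (1:ℝ) = a k * (a k)⁻¹ := (mul_inv_cancel₀ (ha k).ne').symm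
      _ ≤ a k * M := mul_le_mul_of_nonneg_left this (ha k).le
    calc a k * φ₀ = (a k * M) * L := by rw [hφ₀]; ring
    _ ≤ 1 * L := mul_le_mul_of_nonpos_right h2 hL0.le
    _ = L := one_mul L
  set r : Fin n → ℝ := fun k => Real.exp (a k * φ₀) with hr
  have hr0 : ∀ k, 0 ≤ r k := fun k => (Real.exp_pos _).le
  have hrR : ∀ k, r k < R := by
    intro k
    calc r k ≤ Real.exp L := Real.exp_le_exp.mpr (hkey k)
    _ < Real.exp (Real.log R) := Real.exp_lt_exp.mpr hLR
    _ = R := Real.exp_log hR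
  have hsummC := summable_abs_aux c R hsum r hr0 hrR
  set C : ℝ := ∑' J : Fin n →₀ ℕ, ‖c J‖ * ∏ k, (r k) ^ (J k) with hC
  have hterm_pos : 0 < ‖c J₀‖ * ∏ k, (r k) ^ (J₀ k) := by
    apply mul_pos (by simpa [norm_pos_iff] using hJ₀)
    exact Finset.prod_pos fun k _ => pow_pos (Real.exp_pos _) _
  have hCpos : 0 < C := by
    refine lt_of_lt_of_le hterm_pos (hsummC.le_tsum J₀ fun J _ => ?_)
    exact mul_nonneg (norm_nonneg _)
      (Finset.prod_nonneg fun k _ => pow_nonneg (hr0 k) _)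
  refine ⟨φ₀, C, hφ₀neg, hCpos, ?_⟩
  intro z hz hφ
  set φ := phiW a z with hφdef
  have hzk : ∀ k, ‖z k‖ ≤ Real.exp (a k * φ) := by
    intro k
    by_cases h : z k = 0
    · simp [h, (Real.exp_pos _).le]
    · have h1 := (phiW_spec a z hz).2 k h
      have h2 : Real.log (‖z k‖) ≤ a k * φ := by
        have h3 : a k * ((a k)⁻¹ * Real.log (‖z k‖)) ≤ a k * φ :=
          mul_le_mul_of_nonneg_left h1 (ha k).le
        rwa [mul_inv_cancel_left₀ (ha k).ne'] at h3
      calc ‖z k‖ = Real.exp (Real.log (‖z k‖)) :=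
        (Real.exp_log (by simpa [norm_pos_iff] using h)).symm
      _ ≤ Real.exp (a k * φ) := Real.exp_le_exp.mpr h2
  have hzR : ∀ k, ‖z k‖ < R := by
    intro k
    calc ‖z k‖ ≤ Real.exp (a k * φ) := hzk k
    _ ≤ r k := Real.exp_le_exp.mpr (mul_le_mul_of_nonneg_left hφ (ha k).le)
    _ < R := hrR k
  have hsummz := hsum z hzR
  have hsummN := summable_norm_iff.mpr hsummz
  -- bound function
  set h : (Fin n →₀ ℕ) → ℝ :=
    fun J => (‖c J‖ * ∏ k, (r k) ^ (J k)) * Real.exp (m * (φ - φ₀)) with hh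
  have hsummh : Summable h := hsummC.mul_right _
  have hbound : ∀ J, ‖c J * ∏ k, z k ^ J k‖ ≤ h J := by
    intro J
    by_cases hcJ : c J = 0
    · simp only [hcJ, zero_mul, norm_zero, hh, map_zero]
      positivity
    · have hwa := hmin J hcJ
      have h1 : ‖c J * ∏ k, z k ^ J k‖ = ‖c J‖ * ∏ k, (‖z k‖) ^ (J k) := by
        rw [norm_mul, norm_prod]
        exact congrArg _ (Finset.prod_congr rfl fun k _ => norm_pow _ _)
      have h2 : ∏ k, (‖z k‖) ^ (J k) ≤ ∏ k, (Real.exp (a k * φ)) ^ (J k) := by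
        apply Finset.prod_le_prod
        · intro k _; positivity
        · intro k _; exact pow_le_pow_left₀ (norm_nonneg _) (hzk k) _
      have h3 : ∏ k, (Real.exp (a k * φ)) ^ (J k)
          = Real.exp ((∑ k, a k * (J k : ℝ)) * φ) := by
        rw [Finset.sum_mul, Real.exp_sum]
        exact (Finset.prod_congr rfl fun k _ => by
          rw [← Real.exp_nat_mul]; ring_nf).symm
      have h4 : (∑ k, a k * (J k : ℝ)) * φ
          ≤ (∑ k, a k * (J k : ℝ)) * φ₀ + m * (φ - φ₀) := by
        nlinarith [hφ, hwa]
      have h5 : Real.exp ((∑ k, a k * (J k : ℝ)) * φ₀) = ∏ k, (r k) ^ (J k) := by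
        rw [Finset.sum_mul, Real.exp_sum]
        exact Finset.prod_congr rfl fun k _ => by
          rw [← Real.exp_nat_mul]; ring_nf
      calc ‖c J * ∏ k, z k ^ J k‖
          = ‖c J‖ * ∏ k, (‖z k‖) ^ (J k) := h1
      _ ≤ ‖c J‖ * Real.exp ((∑ k, a k * (J k : ℝ)) * φ) := by
          rw [← h3]; exact mul_le_mul_of_nonneg_left h2 (norm_nonneg _)
      _ ≤ ‖c J‖ * (Real.exp ((∑ k, a k * (J k : ℝ)) * φ₀) * Real.exp (m * (φ - φ₀))) := by
          rw [← Real.exp_add]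
          exact mul_le_mul_of_nonneg_left (Real.exp_le_exp.mpr h4) (norm_nonneg _)
      _ = h J := by rw [h5, hh]; ring
  calc ‖∑' J : Fin n →₀ ℕ, c J * ∏ k, z k ^ J k‖
      ≤ ∑' J : Fin n →₀ ℕ, ‖c J * ∏ k, z k ^ J k‖ := by
        exact norm_tsum_le_tsum_norm hsummN
  _ ≤ ∑' J, h J := Summable.tsum_le_tsum hbound hsummN hsummh
  _ = C * Real.exp (m * (φ - φ₀)) := by rw [hh, tsum_mul_right]

lemma ebot_div_neg {x : ℝ} (hx : x < 0) : (⊥ : EReal) / (x : EReal) = ⊤ := by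
  rw [EReal.div_eq_inv_mul, ← EReal.coe_inv,
    EReal.coe_mul_bot_of_neg (inv_lt_zero'.mpr hx)]

lemma liminf_ge {n : ℕ} (c : (Fin n →₀ ℕ) → ℂ) (R : ℝ) (hR : 0 < R)
    (hsum : ∀ z : Fin n → ℂ, (∀ k, ‖z k‖ < R) →
      Summable fun J : Fin n →₀ ℕ => c J * ∏ k, z k ^ J k)
    (a : Fin n → ℝ) (ha : ∀ k, 0 < a k)
    (m : ℝ) (J₀ : Fin n →₀ ℕ) (hJ₀ : c J₀ ≠ 0) (hm : m = ∑ k, a k * (J₀ k : ℝ))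
    (hmin : ∀ J, c J ≠ 0 → m ≤ ∑ k, a k * (J k : ℝ)) :
    ((m : ℝ) : EReal) ≤ dirLelongE
        (fun z => if (∑' J : Fin n →₀ ℕ, c J * ∏ k, z k ^ J k) = 0 then (⊥ : EReal)
          else ((Real.log (‖∑' J : Fin n →₀ ℕ, c J * ∏ k, z k ^ J k‖) : ℝ) : EReal))
        a := by
  obtain ⟨φ₀, C, hφ₀, hC, hest⟩ := upper_est c R hR hsum a ha m J₀ hJ₀ hm hmin
  rw [dirLelongE, Filter.le_liminf_iff]
  intro y hy
  induction y using EReal.rec with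
  | top => exact absurd hy (not_lt.mpr le_top)
  | bot =>
    filter_upwards [(phiW_tendsto a ha).eventually (eventually_le_atBot (-1)),
      eventually_mem_nhdsWithin] with z hφ hz0
    have hφneg : phiW a z < 0 := lt_of_le_of_lt hφ (by norm_num)
    by_cases hf : (∑' J : Fin n →₀ ℕ, c J * ∏ k, z k ^ J k) = 0
    · simp only [hf, if_pos]
      rw [ebot_div_neg hφneg]
      exact bot_lt_top
    · simp only [hf, if_neg, ite_false]
      rw [← EReal.coe_div]
      exact EReal.bot_lt_coe _
  | coe yr =>
    have hyr : yr < m := by exact_mod_cast hy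
    set b : ℝ := (yr + m) / 2 with hb
    have hyb : yr < b := by rw [hb]; linarith
    have hbm : b < m := by rw [hb]; linarith
    set K : ℝ := (m * φ₀ - Real.log C) / (m - b) with hK
    set φ₁ : ℝ := min φ₀ (min (-1) K) with hφ₁
    filter_upwards [(phiW_tendsto a ha).eventually (eventually_le_atBot φ₁),
      eventually_mem_nhdsWithin] with z hφ hz0
    have hz0' : z ≠ 0 := hz0
    set φ := phiW a z with hφdef
    have hφφ₀ : φ ≤ φ₀ := le_trans hφ (min_le_left _ _)
    have hφ1 : φ ≤ -1 := le_trans hφ (le_trans (min_le_right _ _) (min_le_left _ _))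
    have hφK : φ ≤ K := le_trans hφ (le_trans (min_le_right _ _) (min_le_right _ _))
    have hφneg : φ < 0 := lt_of_le_of_lt hφ1 (by norm_num)
    by_cases hf : (∑' J : Fin n →₀ ℕ, c J * ∏ k, z k ^ J k) = 0
    · simp only [hf, if_pos]
      rw [ebot_div_neg hφneg]
      exact lt_top_iff_ne_top.mpr (EReal.coe_ne_top _)
    · simp only [hf, if_neg, ite_false]
      rw [← EReal.coe_div, EReal.coe_lt_coe_iff]
      set F := ‖∑' J : Fin n →₀ ℕ, c J * ∏ k, z k ^ J k‖ with hF
      have hFpos : 0 < F := by simpa [hF, norm_pos_iff] using hf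
      have h1 : Real.log F ≤ Real.log C + m * (φ - φ₀) := by
        calc Real.log F ≤ Real.log (C * Real.exp (m * (φ - φ₀))) :=
          Real.log_le_log hFpos (hest z hz0' hφφ₀)
        _ = Real.log C + m * (φ - φ₀) := by
          rw [Real.log_mul hC.ne' (Real.exp_ne_zero _), Real.log_exp]
      have h2 : (m - b) * φ ≤ m * φ₀ - Real.log C := by
        have h3 : (m - b) * φ ≤ (m - b) * K :=
          mul_le_mul_of_nonneg_left hφK (by linarith)
        have h4 : (m - b) * K = m * φ₀ - Real.log C := by
          rw [hK, mul_div_assoc']; exact mul_div_cancel_left₀ _ (by linarith)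
        linarith
      have h5 : Real.log F ≤ b * φ := by nlinarith
      have h6 : b ≤ Real.log F / φ := (le_div_iff_of_neg hφneg).mpr h5
      linarith

lemma exists_w {n : ℕ} (T₀ : Finset (Fin n →₀ ℕ)) (c : (Fin n →₀ ℕ) → ℂ)
    (J₀ : Fin n →₀ ℕ) (hJ₀T : J₀ ∈ T₀) (hJ₀ : c J₀ ≠ 0) (R : ℝ) (hR : 0 < R) :
    ∃ w : Fin n → ℂ, (∀ k, w k ≠ 0) ∧ (∀ k, ‖w k‖ < R) ∧
      (∑ J ∈ T₀, c J * ∏ k, w k ^ J k) ≠ 0 := by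
  classical
  set p : MvPolynomial (Fin n) ℂ := ∑ J ∈ T₀, MvPolynomial.monomial J (c J) with hp
  have hpeval : ∀ x : Fin n → ℂ,
      MvPolynomial.eval x p = ∑ J ∈ T₀, c J * ∏ k, x k ^ J k := by
    intro x
    rw [hp, map_sum]
    refine Finset.sum_congr rfl fun J _ => ?_
    rw [MvPolynomial.eval_monomial, Finsupp.prod_fintype _ _ (fun k => pow_zero _)]
  have hpne : p ≠ 0 := by
    intro h
    have : MvPolynomial.coeff J₀ p = c J₀ := by
      rw [hp, MvPolynomial.coeff_sum]
      rw [Finset.sum_eq_single J₀]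
      · rw [MvPolynomial.coeff_monomial, if_pos rfl]
      · intro J _ hJne; rw [MvPolynomial.coeff_monomial, if_neg hJne]
      · intro h'; exact absurd hJ₀T h'
    rw [h] at this
    exact hJ₀ (by simpa using this.symm)
  set q : MvPolynomial (Fin n) ℂ := p * ∏ k, MvPolynomial.X k with hq
  have hqne : q ≠ 0 := by
    apply mul_ne_zero hpne
    rw [Finset.prod_ne_zero_iff]
    exact fun k _ => MvPolynomial.X_ne_zero k
  have hw1 : ∃ w₁ : Fin n → ℂ, MvPolynomial.eval w₁ q ≠ 0 := by
    by_contra h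
    push_neg at h
    exact hqne (MvPolynomial.funext (fun x => by rw [h x, map_zero]))
  obtain ⟨w₁, hw₁⟩ := hw1
  have hevalq : MvPolynomial.eval w₁ q = MvPolynomial.eval w₁ p * ∏ k, w₁ k := by
    rw [hq, map_mul, map_prod]
    simp
  have hpw₁ : MvPolynomial.eval w₁ p ≠ 0 := by
    intro h; rw [hevalq, h, zero_mul] at hw₁; exact hw₁ rfl
  have hw₁k : ∀ k, w₁ k ≠ 0 := by
    intro k hk
    rw [hevalq] at hw₁
    exact hw₁ (by rw [Finset.prod_eq_zero (Finset.mem_univ k) hk, mul_zero])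
  -- scaling polynomial in one variable
  set qδ : Polynomial ℂ := ∑ J ∈ T₀, Polynomial.C (c J * ∏ k, w₁ k ^ J k)
    * Polynomial.X ^ (∑ k, J k) with hqδ
  have hqδeval : ∀ d : ℂ, qδ.eval d = ∑ J ∈ T₀, c J * (∏ k, w₁ k ^ J k) * d ^ (∑ k, J k) := by
    intro d
    rw [hqδ, Polynomial.eval_finset_sum]
    exact Finset.sum_congr rfl fun J _ => by
      rw [Polynomial.eval_mul, Polynomial.eval_C, Polynomial.eval_pow, Polynomial.eval_X]
  have hqδ1 : qδ.eval 1 = MvPolynomial.eval w₁ p := by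
    rw [hqδeval, hpeval]
    exact Finset.sum_congr rfl fun J _ => by rw [one_pow, mul_one]
  have hqδne : qδ ≠ 0 := by
    intro h
    rw [h, Polynomial.eval_zero] at hqδ1
    exact hpw₁ hqδ1.symm
  have hroots : {x : ℝ | qδ.eval (x : ℂ) = 0}.Finite := by
    have h1 : {x : ℂ | qδ.IsRoot x}.Finite := Polynomial.finite_setOf_isRoot hqδne
    have h2 : {x : ℝ | qδ.eval (x : ℂ) = 0}
        = (fun x : ℝ => (x : ℂ)) ⁻¹' {x : ℂ | qδ.IsRoot x} := rfl
    rw [h2]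
    exact h1.preimage (fun x _ y _ h => by exact_mod_cast h)
  set W : ℝ := 1 + ∑ k, ‖w₁ k‖ with hW
  have hW1 : (1:ℝ) ≤ W := by
    have : (0:ℝ) ≤ ∑ k, ‖w₁ k‖ :=
      Finset.sum_nonneg fun k _ => norm_nonneg _
    rw [hW]; linarith
  have hWk : ∀ k, ‖w₁ k‖ ≤ W := by
    intro k
    have := Finset.single_le_sum (f := fun j => ‖w₁ j‖)
      (fun j _ => norm_nonneg _) (Finset.mem_univ k)
    rw [hW]; linarith
  set ε : ℝ := min 1 (R / W) with hε
  have hεpos : 0 < ε := lt_min one_pos (div_pos hR (by linarith))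
  obtain ⟨δ, hδ⟩ : ∃ δ, δ ∈ Set.Ioo (0:ℝ) ε \ {x : ℝ | qδ.eval (x : ℂ) = 0} :=
    ((Set.Ioo_infinite hεpos).diff hroots).nonempty
  obtain ⟨⟨hδ0, hδε⟩, hδroot⟩ := hδ
  refine ⟨fun k => (δ : ℂ) * w₁ k, ?_, ?_, ?_⟩
  · intro k
    exact mul_ne_zero (by exact_mod_cast hδ0.ne') (hw₁k k)
  · intro k
    rw [norm_mul, Complex.norm_real, Real.norm_eq_abs, abs_of_pos hδ0]
    calc δ * ‖w₁ k‖ ≤ δ * W :=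
      mul_le_mul_of_nonneg_left (hWk k) hδ0.le
    _ < ε * W := by
      exact mul_lt_mul_of_pos_right hδε (by linarith)
    _ ≤ (R / W) * W := mul_le_mul_of_nonneg_right (min_le_right _ _) (by linarith)
    _ = R := div_mul_cancel₀ R (by linarith : W ≠ 0) |>.symm ▸ rfl
  · have : (∑ J ∈ T₀, c J * ∏ k, ((δ:ℂ) * w₁ k) ^ J k) = qδ.eval (δ : ℂ) := by
      rw [hqδeval]
      refine Finset.sum_congr rfl fun J _ => ?_
      rw [mul_assoc]
      congr 1
      calc ∏ k, ((δ:ℂ) * w₁ k) ^ J k = ∏ k, ((δ:ℂ) ^ J k * w₁ k ^ J k) :=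
        Finset.prod_congr rfl fun k _ => mul_pow _ _ _
      _ = (∏ k, (δ:ℂ) ^ J k) * ∏ k, w₁ k ^ J k := Finset.prod_mul_distrib
      _ = (∏ k, w₁ k ^ J k) * (δ:ℂ) ^ (∑ k, J k) := by
        rw [Finset.prod_pow_eq_pow_sum]; ring
    rw [this]
    exact hδroot

lemma liminf_le_m {n : ℕ} (hn : 1 ≤ n) (c : (Fin n →₀ ℕ) → ℂ) (R : ℝ) (hR : 0 < R)
    (hsum : ∀ z : Fin n → ℂ, (∀ k, ‖z k‖ < R) →
      Summable fun J : Fin n →₀ ℕ => c J * ∏ k, z k ^ J k)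
    (a : Fin n → ℝ) (ha : ∀ k, 0 < a k)
    (m : ℝ) (J₀ : Fin n →₀ ℕ) (hJ₀ : c J₀ ≠ 0) (hm : m = ∑ k, a k * (J₀ k : ℝ))
    (hmin : ∀ J, c J ≠ 0 → m ≤ ∑ k, a k * (J k : ℝ)) :
    dirLelongE
        (fun z => if (∑' J : Fin n →₀ ℕ, c J * ∏ k, z k ^ J k) = 0 then (⊥ : EReal)
          else ((Real.log (‖∑' J : Fin n →₀ ℕ, c J * ∏ k, z k ^ J k‖) : ℝ) : EReal))
        a ≤ ((m : ℝ) : EReal) := by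
  classical
  have hk₀ : Nonempty (Fin n) := ⟨⟨0, hn⟩⟩
  set wa : (Fin n →₀ ℕ) → ℝ := fun J => ∑ k, a k * (J k : ℝ) with hwa
  -- the finite set of minimal-index monomials
  have hfinT : {J : Fin n →₀ ℕ | c J ≠ 0 ∧ wa J = m}.Finite :=
    (finite_low a ha m).subset fun J hJ => le_of_eq hJ.2
  set T₀ : Finset (Fin n →₀ ℕ) := hfinT.toFinset with hT₀
  have hmemT₀ : ∀ J, J ∈ T₀ ↔ c J ≠ 0 ∧ wa J = m := by
    intro J; rw [hT₀, Set.Finite.mem_toFinset]; rfl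
  have hJ₀T : J₀ ∈ T₀ := (hmemT₀ J₀).mpr ⟨hJ₀, hm.symm⟩
  obtain ⟨w, hwne, hwR, hL⟩ := exists_w T₀ c J₀ hJ₀T hJ₀ R hR
  set L : ℂ := ∑ J ∈ T₀, c J * ∏ k, w k ^ J k with hLdef
  -- the curve
  set γ : ℝ → (Fin n → ℂ) := fun t k => w k * ((t ^ (a k) : ℝ) : ℂ) with hγdef
  set l : Filter ℝ := 𝓝[>] (0 : ℝ) with hl
  have habs_w : ∀ k, 0 < ‖w k‖ := by
    intro k; simpa [norm_pos_iff] using hwne k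
  have hγabs : ∀ t, 0 < t → ∀ k, ‖γ t k‖ = ‖w k‖ * t ^ (a k) := by
    intro t ht k
    rw [hγdef]
    simp only [norm_mul, Complex.norm_real, Real.norm_eq_abs]
    rw [abs_of_pos (Real.rpow_pos_of_pos ht _)]
  have hγne : ∀ t, 0 < t → γ t ≠ 0 := by
    intro t ht h
    have := congrFun h ⟨0, hn⟩
    simp only [hγdef, Pi.zero_apply] at this
    exact (mul_ne_zero (hwne _) (by
      exact_mod_cast (Real.rpow_pos_of_pos ht _).ne')) this
  have hγ0 : Tendsto γ l (𝓝 (0 : Fin n → ℂ)) := by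
    rw [tendsto_pi_nhds]
    intro k
    have h1 : Tendsto (fun t : ℝ => t ^ (a k)) (𝓝 0) (𝓝 0) := by
      have := (Real.continuousAt_rpow_const 0 (a k) (Or.inr (ha k).le)).tendsto
      rwa [Real.zero_rpow (ha k).ne'] at this
    have h2 : Tendsto (fun t : ℝ => ((t ^ (a k) : ℝ) : ℂ)) l (𝓝 0) := by
      have h1' : Tendsto (fun t : ℝ => t ^ (a k)) l (𝓝 0) :=
        h1.mono_left (nhdsWithin_le_nhds (s := Set.Ioi (0:ℝ)))
      have := (Complex.continuous_ofReal.tendsto 0).comp h1'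
      rw [Complex.ofReal_zero] at this; exact this
    have h3 := h2.const_mul (w k)
    simpa [hγdef] using h3
  have hγ : Tendsto γ l (𝓝[≠] (0 : Fin n → ℂ)) := by
    rw [tendsto_nhdsWithin_iff]
    refine ⟨hγ0, ?_⟩
    filter_upwards [eventually_mem_nhdsWithin] with t ht
    exact hγne t ht
  -- the weight along the curve
  set Mw : ℝ := Finset.univ.sup' Finset.univ_nonempty
    (fun k => (a k)⁻¹ * Real.log (‖w k‖)) with hMw
  have hlogγ : ∀ t, 0 < t → ∀ k, Real.log (‖γ t k‖)
      = Real.log (‖w k‖) + a k * Real.log t := by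
    intro t ht k
    rw [hγabs t ht k, Real.log_mul (habs_w k).ne' (Real.rpow_pos_of_pos ht _).ne',
      Real.log_rpow ht]
  have hφγ : ∀ t, 0 < t → phiW a (γ t) = Real.log t + Mw := by
    intro t ht
    have hterm : ∀ k, (a k)⁻¹ * Real.log (‖γ t k‖)
        = Real.log t + (a k)⁻¹ * Real.log (‖w k‖) := by
      intro k
      rw [hlogγ t ht k]
      have hk := (ha k).ne'
      field_simp
      ring
    have hγtne : ∀ k, γ t k ≠ 0 := fun k =>
      mul_ne_zero (hwne k) (by exact_mod_cast (Real.rpow_pos_of_pos ht _).ne')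
    obtain ⟨⟨k1, hk1, hphi1⟩, hub⟩ := phiW_spec a (γ t) (hγne t ht)
    apply le_antisymm
    · rw [hphi1, hterm k1]
      have : (a k1)⁻¹ * Real.log (‖w k1‖) ≤ Mw := by
        rw [hMw]
        exact Finset.le_sup' (fun k => (a k)⁻¹ * Real.log (‖w k‖))
          (Finset.mem_univ k1)
      linarith
    · obtain ⟨k2, -, hk2⟩ := Finset.exists_mem_eq_sup' Finset.univ_nonempty
        (fun k => (a k)⁻¹ * Real.log (‖w k‖))
      have := hub k2 (hγtne k2)
      rw [hterm k2] at this
      rw [hMw, hk2]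
      linarith
  -- the normalized series g
  set g : ℝ → ℂ := fun t => ∑' J : Fin n →₀ ℕ,
    c J * (∏ k, w k ^ J k) * ((t ^ (wa J - m) : ℝ) : ℂ) with hg
  have hfγ : ∀ t, 0 < t → t ≤ 1 →
      (∑' J : Fin n →₀ ℕ, c J * ∏ k, γ t k ^ J k) = ((t ^ (m : ℝ) : ℝ) : ℂ) * g t := by
    intro t ht ht1
    rw [hg, ← tsum_mul_left]
    refine tsum_congr fun J => ?_
    have h1 : ∏ k, γ t k ^ J k = (∏ k, w k ^ J k) * ((t ^ (wa J) : ℝ) : ℂ) := by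
      rw [rpow_wa a t ht J, Complex.ofReal_prod]
      rw [← Finset.prod_mul_distrib]
      refine Finset.prod_congr rfl fun k _ => ?_
      rw [hγdef]
      push_cast
      rw [mul_pow]
    have h2 : (t ^ (wa J) : ℝ) = t ^ (m : ℝ) * t ^ (wa J - m) := by
      rw [← Real.rpow_add ht]; ring_nf
    rw [h1, h2]
    push_cast
    ring
  -- limit of g
  set gl : (Fin n →₀ ℕ) → ℂ := fun J => if J ∈ T₀ then c J * ∏ k, w k ^ J k else 0
    with hgl
  have hgl_tsum : ∑' J, gl J = L := by
    rw [hLdef, tsum_eq_sum (s := T₀) (fun J hJ => if_neg hJ)]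
    exact Finset.sum_congr rfl fun J hJ => if_pos hJ
  have hgtend : Tendsto g l (𝓝 L) := by
    have hsummb : Summable (fun J : Fin n →₀ ℕ =>
        ‖c J‖ * (∏ k, (‖w k‖ * ((2:ℝ)⁻¹) ^ (a k)) ^ (J k))
          * (((2:ℝ)⁻¹) ^ (-m : ℝ))) := by
      apply Summable.mul_right
      apply summable_abs_aux c R hsum
      · intro k
        exact mul_nonneg (norm_nonneg _)
          (Real.rpow_pos_of_pos (by norm_num) _).le
      · intro k
        have h1 : ((2:ℝ)⁻¹) ^ (a k) ≤ 1 :=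
          Real.rpow_le_one (by norm_num) (by norm_num) (ha k).le
        have h2 : ‖w k‖ * ((2:ℝ)⁻¹) ^ (a k) ≤ ‖w k‖ * 1 :=
          mul_le_mul_of_nonneg_left h1 (norm_nonneg _)
        rw [mul_one] at h2
        exact lt_of_le_of_lt h2 (hwR k)
    have hpoint : ∀ J : Fin n →₀ ℕ, Tendsto
        (fun t : ℝ => c J * (∏ k, w k ^ J k) * ((t ^ (wa J - m) : ℝ) : ℂ)) l (𝓝 (gl J)) := by
      intro J
      by_cases hJT : J ∈ T₀
      · have hwaJ : wa J = m := ((hmemT₀ J).mp hJT).2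
        have heq : ∀ t : ℝ, c J * (∏ k, w k ^ J k) * ((t ^ (wa J - m) : ℝ) : ℂ)
            = c J * ∏ k, w k ^ J k := by
          intro t
          rw [hwaJ, sub_self, Real.rpow_zero]
          push_cast; ring
        simp only [heq, hgl, if_pos hJT]
        exact tendsto_const_nhds
      · rw [hgl]
        simp only [if_neg hJT]
        by_cases hcJ : c J = 0
        · simp only [hcJ, zero_mul]
          exact tendsto_const_nhds
        · have hwaJ : m < wa J := by
            rcases lt_or_eq_of_le (hmin J hcJ) with h | h
            · exact h
            · exact absurd ((hmemT₀ J).mpr ⟨hcJ, h.symm⟩) hJT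
          have he : 0 < wa J - m := by linarith
          have h1 : Tendsto (fun t : ℝ => t ^ (wa J - m)) (𝓝 0) (𝓝 0) := by
            have := (Real.continuousAt_rpow_const 0 (wa J - m) (Or.inr he.le)).tendsto
            rwa [Real.zero_rpow he.ne'] at this
          have h2 : Tendsto (fun t : ℝ => ((t ^ (wa J - m) : ℝ) : ℂ)) l (𝓝 0) := by
            have h1' : Tendsto (fun t : ℝ => t ^ (wa J - m)) l (𝓝 0) :=
              h1.mono_left (nhdsWithin_le_nhds (s := Set.Ioi (0:ℝ)))
            have := (Complex.continuous_ofReal.tendsto 0).comp h1'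
            rw [Complex.ofReal_zero] at this; exact this
          have h3 := h2.const_mul (c J * ∏ k, w k ^ J k)
          simpa using h3
    have hbd : ∀ᶠ t in l, ∀ J : Fin n →₀ ℕ,
        ‖c J * (∏ k, w k ^ J k) * ((t ^ (wa J - m) : ℝ) : ℂ)‖
          ≤ ‖c J‖ * (∏ k, (‖w k‖ * ((2:ℝ)⁻¹) ^ (a k)) ^ (J k))
            * (((2:ℝ)⁻¹) ^ (-m : ℝ)) := by
      have hIoc : Set.Ioc (0:ℝ) 2⁻¹ ∈ l :=
        Ioc_mem_nhdsGT_of_mem ⟨le_refl 0, by norm_num⟩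
      filter_upwards [hIoc] with t ht
      obtain ⟨ht0, ht2⟩ := ht
      intro J
      have habs : ‖c J * (∏ k, w k ^ J k) * ((t ^ (wa J - m) : ℝ) : ℂ)‖
          = ‖c J‖ * (∏ k, ‖w k‖ ^ J k) * t ^ (wa J - m) := by
        rw [norm_mul, norm_mul, norm_prod, Complex.norm_real, Real.norm_eq_abs,
          abs_of_pos (Real.rpow_pos_of_pos ht0 _)]
        congr 2
        exact Finset.prod_congr rfl fun k _ => norm_pow _ _
      rw [habs]
      by_cases hcJ : c J = 0
      · rw [hcJ]
        simp only [norm_zero, zero_mul]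
        exact le_refl 0
      · have hwaJ : 0 ≤ wa J - m := by linarith [hmin J hcJ]
        have h1 : t ^ (wa J - m) ≤ (2⁻¹ : ℝ) ^ (wa J - m) :=
          Real.rpow_le_rpow ht0.le ht2 hwaJ
        have h2 : (∏ k, (‖w k‖ * ((2:ℝ)⁻¹) ^ (a k)) ^ (J k))
            = (∏ k, ‖w k‖ ^ J k) * (2⁻¹ : ℝ) ^ (wa J) := by
          rw [rpow_wa a 2⁻¹ (by norm_num) J, ← Finset.prod_mul_distrib]
          exact Finset.prod_congr rfl fun k _ => mul_pow _ _ _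
        have h3 : (2⁻¹ : ℝ) ^ (wa J) * (2⁻¹ : ℝ) ^ (-m : ℝ) = (2⁻¹ : ℝ) ^ (wa J - m) := by
          rw [← Real.rpow_add (by norm_num)]; ring_nf
        rw [h2]
        calc ‖c J‖ * (∏ k, ‖w k‖ ^ J k) * t ^ (wa J - m)
            ≤ ‖c J‖ * (∏ k, ‖w k‖ ^ J k) * (2⁻¹ : ℝ) ^ (wa J - m) := by
              apply mul_le_mul_of_nonneg_left h1
              exact mul_nonneg (norm_nonneg _)
                (Finset.prod_nonneg fun k _ => pow_nonneg (norm_nonneg _) _)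
        _ = ‖c J‖ * ((∏ k, ‖w k‖ ^ J k) * (2⁻¹ : ℝ) ^ (wa J))
            * (2⁻¹ : ℝ) ^ (-m : ℝ) := by rw [← h3]; ring
    have key := tendsto_tsum_of_dominated_convergence (𝓕 := l) hsummb hpoint hbd
    rw [hgl_tsum] at key
    exact key
  -- g is eventually nonzero, the logs converge
  have habsL : 0 < ‖L‖ := by simpa [norm_pos_iff] using hL
  have hgne : ∀ᶠ t in l, g t ≠ 0 := hgtend.eventually_ne hL
  have hlogg : Tendsto (fun t => Real.log (‖g t‖)) l
      (𝓝 (Real.log (‖L‖))) :=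
    ((Real.continuousAt_log habsL.ne').tendsto).comp
      ((continuous_norm.tendsto L).comp hgtend)
  have hlogt : Tendsto Real.log l atBot := Real.tendsto_log_nhdsGT_zero
  have hden : Tendsto (fun t => Real.log t + Mw) l atBot :=
    tendsto_atBot_add_const_right l Mw hlogt
  have hdenneg : ∀ᶠ t in l, Real.log t + Mw < 0 :=
    hden.eventually (eventually_lt_atBot 0)
  -- the ratio tends to m
  have hratio : Tendsto (fun t => (m * Real.log t + Real.log (‖g t‖))
      / (Real.log t + Mw)) l (𝓝 m) := by
    have h0 : Tendsto (fun t => (Real.log (‖g t‖) - m * Mw)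
        / (Real.log t + Mw)) l (𝓝 0) := by
      have hnum : Tendsto (fun t => -(Real.log (‖g t‖) - m * Mw)) l
          (𝓝 (-(Real.log (‖L‖) - m * Mw))) := (hlogg.sub_const _).neg
      have hden' : Tendsto (fun t => -(Real.log t + Mw)) l atTop :=
        tendsto_neg_atBot_atTop.comp hden
      have h5 := hnum.div_atTop hden'
      apply h5.congr
      intro t
      rw [neg_div_neg_eq]
    have h1 : Tendsto (fun t => m + (Real.log (‖g t‖) - m * Mw)
        / (Real.log t + Mw)) l (𝓝 m) := by
      have := (tendsto_const_nhds (x := m) (f := l)).add h0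
      simpa using this
    apply h1.congr'
    filter_upwards [hdenneg] with t hdt
    have hdt' : Real.log t + Mw ≠ 0 := hdt.ne
    field_simp
    ring
  -- the EReal composition tends to m
  set u : (Fin n → ℂ) → EReal := fun z =>
    if (∑' J : Fin n →₀ ℕ, c J * ∏ k, z k ^ J k) = 0 then (⊥ : EReal)
    else ((Real.log (‖∑' J : Fin n →₀ ℕ, c J * ∏ k, z k ^ J k‖) : ℝ) : EReal)
    with hu
  have hcomp : Tendsto (fun t => u (γ t) / ((phiW a (γ t) : ℝ) : EReal)) l
      (𝓝 ((m : ℝ) : EReal)) := by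
    apply Tendsto.congr' _ (EReal.tendsto_coe.mpr hratio)
    have hIoo : Set.Ioo (0:ℝ) 1 ∈ l :=
      Ioo_mem_nhdsGT_of_mem ⟨le_refl 0, by norm_num⟩
    filter_upwards [hIoo, hgne, hdenneg] with t ⟨ht0, ht1⟩ hgt hdt
    have hfval := hfγ t ht0 ht1.le
    have htm : (0:ℝ) < t ^ (m : ℝ) := Real.rpow_pos_of_pos ht0 _
    have hfne : (∑' J : Fin n →₀ ℕ, c J * ∏ k, γ t k ^ J k) ≠ 0 := by
      rw [hfval]
      exact mul_ne_zero (by exact_mod_cast htm.ne') hgt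
    have habsf : ‖∑' J : Fin n →₀ ℕ, c J * ∏ k, γ t k ^ J k‖
        = t ^ (m : ℝ) * ‖g t‖ := by
      rw [hfval, norm_mul, Complex.norm_real, Real.norm_eq_abs, abs_of_pos htm]
    have hlogf : Real.log (‖∑' J : Fin n →₀ ℕ, c J * ∏ k, γ t k ^ J k‖)
        = m * Real.log t + Real.log (‖g t‖) := by
      have hgabs : 0 < ‖g t‖ := by simpa [norm_pos_iff] using hgt
      rw [habsf, Real.log_mul htm.ne' hgabs.ne', Real.log_rpow ht0]
    rw [hu]
    simp only [if_neg hfne]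
    rw [hφγ t ht0, hlogf, ← EReal.coe_div]
  -- conclude
  rw [dirLelongE]
  have hle : liminf (fun z => u z / ((phiW a z : ℝ) : EReal)) (𝓝[≠] (0 : Fin n → ℂ))
      ≤ liminf (fun z => u z / ((phiW a z : ℝ) : EReal)) (Filter.map γ l) :=
    liminf_le_liminf_of_le hγ
  have heq : liminf (fun z => u z / ((phiW a z : ℝ) : EReal)) (Filter.map γ l)
      = liminf (fun t => u (γ t) / ((phiW a (γ t) : ℝ) : EReal)) l := by
    rw [Filter.liminf, Filter.liminf, Filter.map_map]
    rfl
  calc liminf (fun z => u z / ((phiW a z : ℝ) : EReal)) (𝓝[≠] (0 : Fin n → ℂ))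
      ≤ liminf (fun t => u (γ t) / ((phiW a (γ t) : ℝ) : EReal)) l := heq ▸ hle
  _ = ((m : ℝ) : EReal) := hcomp.liminf_eq

/-- **Kiselman's directional Lelong number of `log|f|` equals the index of `f`
with respect to the weight `a`:** if `f(z) = Σ_J c_J z^J` is given by a power
series summable on a polydisc of radius `R > 0` with not all `c_J = 0`, then
`ν(log|f|, a) = min { ⟨a, J⟩ : c_J ≠ 0 }`. -/
theorem dirLelong_log_abs_eq_index (n : ℕ) (hn : 1 ≤ n)
    (c : (Fin n →₀ ℕ) → ℂ) (hc : ∃ J, c J ≠ 0) (R : ℝ) (hR : 0 < R)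
    (hsum : ∀ z : Fin n → ℂ, (∀ k, ‖z k‖ < R) →
      Summable fun J : Fin n →₀ ℕ => c J * ∏ k, z k ^ J k)
    (a : Fin n → ℝ) (ha : ∀ k, 0 < a k) :
    dirLelongE
        (fun z => if (∑' J : Fin n →₀ ℕ, c J * ∏ k, z k ^ J k) = 0 then (⊥ : EReal)
          else ((Real.log (‖∑' J : Fin n →₀ ℕ, c J * ∏ k, z k ^ J k‖) : ℝ) : EReal))
        a
      = ((sInf {x : ℝ | ∃ J : Fin n →₀ ℕ, c J ≠ 0 ∧ x = ∑ k, a k * (J k : ℝ)} : ℝ) : EReal) := by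
  obtain ⟨J₀, hJ₀, hmin, hsInf⟩ := exists_min_index a ha c hc
  rw [hsInf]
  exact le_antisymm
    (liminf_le_m hn c R hR hsum a ha _ J₀ hJ₀ rfl hmin)
    (liminf_ge c R hR hsum a ha _ J₀ hJ₀ rfl hmin)
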